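/- arXiv:2002.12008 — 5 statements merged into one kernel-verified Lean document; each statement's English description precedes it below -/
import Mathlib

section
/- For every integer N ≥ 2 and every real number φ with 0 < φ < π/N, the first-visit generating function of the simple random walk on {0,1,…,N} absorbed at 0 and N, started at N−1 and evaluated at the point N, satisfies ∑_{n≥0} a_n(N−1) · (1/(2·cos φ))^n = sin((N−1)·φ) / sin(N·φ), where the series converges. -/
/-- `walkCount N x n` is the number of integer sequences `(s 0, …, s n)` with
`s 0 = x`, `s n = N`, `|s (k+1) - s k| = 1` for all `0 ≤ k < n`, and
`0 < s k < N` for all `0 ≤ k < n`. -/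
noncomputable def walkCount (N x n : ℕ) : ℕ :=
  Nat.card {s : Fin (n + 1) → ℤ //
    s 0 = (x : ℤ) ∧ s (Fin.last n) = (N : ℤ) ∧
    (∀ k : Fin n, |s k.succ - s k.castSucc| = 1) ∧
    (∀ k : Fin n, 0 < s k.castSucc ∧ s k.castSucc < (N : ℤ))}

def Cond (N x n : ℕ) (s : Fin (n + 1) → ℤ) : Prop :=
  s 0 = (x : ℤ) ∧ s (Fin.last n) = (N : ℤ) ∧
    (∀ k : Fin n, |s k.succ - s k.castSucc| = 1) ∧
    (∀ k : Fin n, 0 < s k.castSucc ∧ s k.castSucc < (N : ℤ))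

lemma walkCount_eq (N x n : ℕ) : walkCount N x n = Nat.card {s // Cond N x n s} := rfl

instance condFinite (N x n : ℕ) : Finite {s : Fin (n + 1) → ℤ // Cond N x n s} := by
  haveI := (Set.finite_Icc (0 : ℤ) (N : ℤ)).to_subtype
  have key : ∀ (s : {s : Fin (n + 1) → ℤ // Cond N x n s}) (k : Fin (n + 1)),
      s.1 k ∈ Set.Icc (0 : ℤ) (N : ℤ) := by
    rintro ⟨s, h0, hl, hstep, hint⟩ k
    induction k using Fin.lastCases with
    | last => simp [hl]
    | cast k => exact ⟨(hint k).1.le, (hint k).2.le⟩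
  apply Finite.of_injective
    (fun s => fun k => (⟨s.1 k, key s k⟩ : Set.Icc (0 : ℤ) (N : ℤ)))
  intro a b hab
  ext k
  exact congrArg Subtype.val (congrFun hab k)

lemma walkCount_zero (N x : ℕ) : walkCount N x 0 = if x = N then 1 else 0 := by
  rw [walkCount_eq]
  split_ifs with h
  · subst h
    rw [Nat.card_eq_one_iff_unique]
    constructor
    · constructor
      rintro ⟨s, hs0, -, -, -⟩ ⟨t, ht0, -, -, -⟩
      apply Subtype.ext
      funext k
      have hk : k = 0 := Fin.fin_one_eq_zero k
      subst hk
      show s 0 = t 0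
      rw [hs0, ht0]
    · exact ⟨⟨fun _ => (x : ℤ), rfl, rfl, fun k => k.elim0, fun k => k.elim0⟩⟩
  · have : IsEmpty {s : Fin 1 → ℤ // Cond N x 0 s} := by
      constructor
      rintro ⟨s, hs0, hsl, -, -⟩
      have : (Fin.last 0) = (0 : Fin 1) := rfl
      rw [this, hs0] at hsl
      exact h (by exact_mod_cast hsl)
    exact Nat.card_of_isEmpty

lemma walkCount_succ_boundary (N x n : ℕ) (h : ¬(0 < x ∧ x < N)) :
    walkCount N x (n + 1) = 0 := by
  rw [walkCount_eq]
  have : IsEmpty {s : Fin (n + 2) → ℤ // Cond N x (n + 1) s} := by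
    constructor
    rintro ⟨s, hs0, -, -, hint⟩
    have h0 := hint 0
    rw [show Fin.castSucc (0 : Fin (n + 1)) = 0 from rfl, hs0] at h0
    exact h ⟨by exact_mod_cast h0.1, by exact_mod_cast h0.2⟩
  exact Nat.card_of_isEmpty

lemma cond_first_step {N x n : ℕ} {s : Fin (n + 2) → ℤ} (h : Cond N x (n + 1) s) :
    s 1 = (x : ℤ) + 1 ∨ s 1 = (x : ℤ) - 1 := by
  obtain ⟨h0, -, hstep, -⟩ := h
  have h1 := hstep 0
  rw [show (0 : Fin (n + 1)).succ = 1 from rfl,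
    show Fin.castSucc (0 : Fin (n + 1)) = 0 from rfl, h0] at h1
  rcases abs_eq (by norm_num : (0:ℤ) ≤ 1) |>.mp h1 with h | h
  · left; omega
  · right; omega

lemma cond_shift {N x n : ℕ} {s : Fin (n + 2) → ℤ} (h : Cond N x (n + 1) s)
    (y : ℕ) (hy : s 1 = (y : ℤ)) : Cond N y n (s ∘ Fin.succ) := by
  obtain ⟨h0, hl, hstep, hint⟩ := h
  refine ⟨?_, ?_, ?_, ?_⟩
  · show s (Fin.succ 0) = (y : ℤ)
    rw [show Fin.succ (0 : Fin (n + 1)) = 1 from rfl, hy]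
  · show s (Fin.succ (Fin.last n)) = (N : ℤ)
    rw [Fin.succ_last]; exact hl
  · intro k
    have hk := hstep k.succ
    show |s k.succ.succ - s k.castSucc.succ| = 1
    rwa [Fin.succ_castSucc]
  · intro k
    have hk := hint k.succ
    show 0 < s k.castSucc.succ ∧ s k.castSucc.succ < (N : ℤ)
    rwa [Fin.succ_castSucc]

lemma cond_cons {N x n : ℕ} (hx : 0 < x) (hxN : x < N) {t : Fin (n + 1) → ℤ}
    {y : ℕ} (hc : Cond N y n t) (hy : (y : ℤ) = (x : ℤ) + 1 ∨ (y : ℤ) = (x : ℤ) - 1) :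
    Cond N x (n + 1) (Fin.cases (x : ℤ) t) := by
  obtain ⟨h0, hl, hstep, hint⟩ := hc
  refine ⟨?_, ?_, ?_, ?_⟩
  · simp
  · show Fin.cases (motive := fun _ => ℤ) (x : ℤ) t (Fin.last (n + 1)) = (N : ℤ)
    rw [← Fin.succ_last, Fin.cases_succ]; exact hl
  · intro k
    induction k using Fin.cases with
    | zero =>
      show |Fin.cases (motive := fun _ => ℤ) (x : ℤ) t (Fin.succ 0) -
        Fin.cases (motive := fun _ => ℤ) (x : ℤ) t (Fin.castSucc 0)| = 1
      rw [Fin.cases_succ, Fin.castSucc_zero, Fin.cases_zero, h0]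
      rcases hy with h | h <;> rw [h] <;> simp
    | succ j =>
      show |Fin.cases (motive := fun _ => ℤ) (x : ℤ) t j.succ.succ -
        Fin.cases (motive := fun _ => ℤ) (x : ℤ) t j.succ.castSucc| = 1
      rw [← Fin.succ_castSucc, Fin.cases_succ, Fin.cases_succ]
      exact hstep j
  · intro k
    induction k using Fin.cases with
    | zero =>
      show 0 < Fin.cases (motive := fun _ => ℤ) (x : ℤ) t (Fin.castSucc 0) ∧
        Fin.cases (motive := fun _ => ℤ) (x : ℤ) t (Fin.castSucc 0) < (N : ℤ)
      rw [Fin.castSucc_zero, Fin.cases_zero]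
      exact ⟨by exact_mod_cast hx, by exact_mod_cast hxN⟩
    | succ j =>
      show 0 < Fin.cases (motive := fun _ => ℤ) (x : ℤ) t j.succ.castSucc ∧
        Fin.cases (motive := fun _ => ℤ) (x : ℤ) t j.succ.castSucc < (N : ℤ)
      rw [← Fin.succ_castSucc, Fin.cases_succ]
      exact hint j

lemma cases_one {n : ℕ} (a : ℤ) (t : Fin (n + 1) → ℤ) :
    Fin.cases (motive := fun _ => ℤ) a t 1 = t 0 := by
  rw [show (1 : Fin (n + 2)) = Fin.succ 0 from rfl, Fin.cases_succ]

lemma walkCount_succ (N x n : ℕ) (hx : 0 < x) (hxN : x < N) :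
    walkCount N x (n + 1) = walkCount N (x + 1) n + walkCount N (x - 1) n := by
  have hcast : ((x - 1 : ℕ) : ℤ) = (x : ℤ) - 1 := by omega
  have hcast' : ((x + 1 : ℕ) : ℤ) = (x : ℤ) + 1 := by push_cast; ring
  set f : {t : Fin (n + 1) → ℤ // Cond N (x + 1) n t} ⊕
      {t : Fin (n + 1) → ℤ // Cond N (x - 1) n t} →
      {s : Fin (n + 2) → ℤ // Cond N x (n + 1) s} :=
    Sum.elim
      (fun t => ⟨Fin.cases (x : ℤ) t.1, cond_cons hx hxN t.2 (Or.inl hcast')⟩)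
      (fun t => ⟨Fin.cases (x : ℤ) t.1, cond_cons hx hxN t.2 (Or.inr hcast)⟩) with hf
  have hinj : Function.Injective f := by
    have key : ∀ (t t' : Fin (n + 1) → ℤ),
        Fin.cases (motive := fun _ => ℤ) (x : ℤ) t = Fin.cases (x : ℤ) t' → t = t' := by
      intro t t' h
      funext k
      have := congrFun h k.succ
      rwa [Fin.cases_succ, Fin.cases_succ] at this
    rintro (⟨t, ht⟩ | ⟨t, ht⟩) (⟨t', ht'⟩ | ⟨t', ht'⟩) h <;>
      rw [hf] at h <;> simp only [Sum.elim_inl, Sum.elim_inr, Subtype.mk.injEq] at h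
    · rw [Sum.inl.injEq, Subtype.mk.injEq]; exact key _ _ h
    · exfalso
      have h1 := congrFun h 1
      rw [cases_one, cases_one, ht.1, ht'.1, hcast, hcast'] at h1
      omega
    · exfalso
      have h1 := congrFun h 1
      rw [cases_one, cases_one, ht.1, ht'.1, hcast, hcast'] at h1
      omega
    · rw [Sum.inr.injEq, Subtype.mk.injEq]; exact key _ _ h
  have hsurj : Function.Surjective f := by
    rintro ⟨s, hs⟩
    have hext : ∀ (h : Cond N x (n + 1) s) (hc : _),
        (⟨Fin.cases (x : ℤ) (s ∘ Fin.succ), hc⟩ :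
          {s : Fin (n + 2) → ℤ // Cond N x (n + 1) s}) = ⟨s, h⟩ := by
      intro h hc
      apply Subtype.ext
      funext k
      induction k using Fin.cases with
      | zero =>
        show Fin.cases (motive := fun _ => ℤ) (x : ℤ) (s ∘ Fin.succ) 0 = s 0
        rw [Fin.cases_zero, h.1]
      | succ j =>
        show Fin.cases (motive := fun _ => ℤ) (x : ℤ) (s ∘ Fin.succ) j.succ = s j.succ
        rw [Fin.cases_succ]; rfl
    rcases cond_first_step hs with h1 | h1
    · exact ⟨Sum.inl ⟨s ∘ Fin.succ, cond_shift hs (x + 1) (by rw [h1, hcast'])⟩,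
        hext hs _⟩
    · exact ⟨Sum.inr ⟨s ∘ Fin.succ, cond_shift hs (x - 1) (by rw [h1, hcast])⟩,
        hext hs _⟩
  rw [walkCount_eq, walkCount_eq, walkCount_eq,
    Nat.card_congr (Equiv.ofBijective f ⟨hinj, hsurj⟩).symm, Nat.card_sum]

open Real in
lemma walkCount_bound (N : ℕ) (hN : 2 ≤ N) (ψ : ℝ) (hψ0 : 0 < ψ)
    (hψ : (N : ℝ) * ψ < π) :
    ∀ n x, x ≤ N → (walkCount N x n : ℝ) * Real.sin ((N : ℝ) * ψ) ≤
      (2 * Real.cos ψ) ^ n * Real.sin ((x : ℝ) * ψ) := by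
  have hN2 : (2 : ℝ) ≤ (N : ℝ) := by exact_mod_cast hN
  have hψπ : ψ < π / 2 := by nlinarith [Real.pi_pos]
  have hcos : 0 < Real.cos ψ := Real.cos_pos_of_mem_Ioo ⟨by linarith [Real.pi_pos], hψπ⟩
  have hsin : ∀ x : ℕ, x ≤ N → 0 ≤ Real.sin ((x : ℝ) * ψ) := by
    intro x hx
    apply Real.sin_nonneg_of_nonneg_of_le_pi
    · positivity
    · have : (x : ℝ) ≤ (N : ℝ) := by exact_mod_cast hx
      nlinarith
  intro n
  induction n with
  | zero =>
    intro x hx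
    rw [walkCount_zero]
    split_ifs with h
    · subst h; simp
    · simp [hsin x hx]
  | succ n ih =>
    intro x hx
    by_cases hxb : 0 < x ∧ x < N
    · obtain ⟨hx0, hxN⟩ := hxb
      rw [walkCount_succ N x n hx0 hxN]
      have ih1 := ih (x + 1) (by omega)
      have ih2 := ih (x - 1) (by omega)
      have hc1 : ((x + 1 : ℕ) : ℝ) = (x : ℝ) + 1 := by push_cast; ring
      have hc2 : ((x - 1 : ℕ) : ℝ) = (x : ℝ) - 1 := by
        have : (1 : ℕ) ≤ x := hx0
        push_cast [this]; ring
      rw [hc1] at ih1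
      rw [hc2] at ih2
      have htrig : Real.sin (((x : ℝ) + 1) * ψ) + Real.sin (((x : ℝ) - 1) * ψ)
          = 2 * Real.cos ψ * Real.sin ((x : ℝ) * ψ) := by
        rw [show ((x : ℝ) + 1) * ψ = (x : ℝ) * ψ + ψ by ring,
          show ((x : ℝ) - 1) * ψ = (x : ℝ) * ψ - ψ by ring,
          Real.sin_add, Real.sin_sub]
        ring
      push_cast
      calc ((walkCount N (x + 1) n : ℝ) + (walkCount N (x - 1) n : ℝ)) *
            Real.sin ((N : ℝ) * ψ)
          = (walkCount N (x + 1) n : ℝ) * Real.sin ((N : ℝ) * ψ) +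
            (walkCount N (x - 1) n : ℝ) * Real.sin ((N : ℝ) * ψ) := by ring
        _ ≤ (2 * Real.cos ψ) ^ n * Real.sin (((x : ℝ) + 1) * ψ) +
            (2 * Real.cos ψ) ^ n * Real.sin (((x : ℝ) - 1) * ψ) := by
            exact add_le_add ih1 ih2
        _ = (2 * Real.cos ψ) ^ n * (2 * Real.cos ψ * Real.sin ((x : ℝ) * ψ)) := by
            rw [← mul_add, htrig]
        _ = (2 * Real.cos ψ) ^ (n + 1) * Real.sin ((x : ℝ) * ψ) := by ring
    · rw [walkCount_succ_boundary N x n hxb]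
      simp only [Nat.cast_zero, zero_mul]
      exact mul_nonneg (by positivity) (hsin x hx)

/-- The first-visit generating function of SRW on `{0,…,N}` absorbed at `0` and `N`,
started at `N - 1`, evaluated at `z = 1 / cos φ`, equals `sin ((N-1) φ) / sin (N φ)`. -/
theorem firstVisitGenFun_pred (N : ℕ) (hN : 2 ≤ N) (φ : ℝ) (hφ0 : 0 < φ)
    (hφ : φ < Real.pi / N) :
    HasSum (fun n : ℕ => (walkCount N (N - 1) n : ℝ) * (1 / (2 * Real.cos φ)) ^ n)
      (Real.sin (((N : ℝ) - 1) * φ) / Real.sin ((N : ℝ) * φ)) := by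
  have hNR : (2 : ℝ) ≤ (N : ℝ) := by exact_mod_cast hN
  have hNpos : (0 : ℝ) < N := by linarith
  have hπ := Real.pi_pos
  have hπN2 : Real.pi / N ≤ Real.pi / 2 := by gcongr
  set ψ := (φ + Real.pi / N) / 2 with hψdef
  have hφψ : φ < ψ := by rw [hψdef]; linarith
  have hψπN : ψ < Real.pi / N := by rw [hψdef]; linarith
  have hψ0 : 0 < ψ := by linarith
  have hNψ : (N : ℝ) * ψ < Real.pi := by
    have := (lt_div_iff₀ hNpos).mp hψπN; linarith
  have hNψ0 : 0 < (N : ℝ) * ψ := by positivity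
  have hφπ2 : φ < Real.pi / 2 := by linarith
  have hψπ2 : ψ < Real.pi / 2 := by linarith
  have hcosφ : 0 < Real.cos φ := Real.cos_pos_of_mem_Ioo ⟨by linarith, hφπ2⟩
  have hcosψ : 0 < Real.cos ψ := Real.cos_pos_of_mem_Ioo ⟨by linarith, hψπ2⟩
  have hsinNψ : 0 < Real.sin ((N : ℝ) * ψ) := Real.sin_pos_of_pos_of_lt_pi hNψ0 hNψ
  have hNφ : (N : ℝ) * φ < Real.pi := by
    have := (lt_div_iff₀ hNpos).mp hφ; linarith
  have hsinNφ : 0 < Real.sin ((N : ℝ) * φ) :=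
    Real.sin_pos_of_pos_of_lt_pi (by positivity) hNφ
  have hsinφ : 0 < Real.sin φ := Real.sin_pos_of_pos_of_lt_pi hφ0 (by linarith)
  have hcc : Real.cos ψ < Real.cos φ :=
    Real.cos_lt_cos_of_nonneg_of_le_pi hφ0.le (by linarith) hφψ
  set q : ℝ := 1 / (2 * Real.cos φ) with hq
  have hq0 : 0 < q := by rw [hq]; positivity
  -- summability
  have hsummand : ∀ x, x ≤ N → ∀ n, (walkCount N x n : ℝ) * q ^ n ≤
      (Real.sin ((x : ℝ) * ψ) / Real.sin ((N : ℝ) * ψ)) *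
        (Real.cos ψ / Real.cos φ) ^ n := by
    intro x hx n
    have hb := walkCount_bound N hN ψ hψ0 hNψ n x hx
    have hqn : (0 : ℝ) < q ^ n := by positivity
    have h1 : (walkCount N x n : ℝ) * q ^ n * Real.sin ((N : ℝ) * ψ) ≤
        (2 * Real.cos ψ) ^ n * q ^ n * Real.sin ((x : ℝ) * ψ) := by
      nlinarith [hb, hqn]
    have h2 : (2 * Real.cos ψ) ^ n * q ^ n = (Real.cos ψ / Real.cos φ) ^ n := by
      rw [hq, ← mul_pow]
      congr 1
      field_simp
    rw [h2] at h1
    rw [div_mul_eq_mul_div, le_div_iff₀ hsinNψ]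
    linarith
  have hsummable : ∀ x, x ≤ N → Summable (fun n => (walkCount N x n : ℝ) * q ^ n) := by
    intro x hx
    apply Summable.of_nonneg_of_le (fun n => by positivity) (hsummand x hx)
    exact (summable_geometric_of_lt_one (by positivity)
      (by rw [div_lt_one hcosφ]; exact hcc)).mul_left _
  set S : ℕ → ℝ := fun x => ∑' n, (walkCount N x n : ℝ) * q ^ n with hSdef
  have hS0 : S 0 = 0 := by
    rw [hSdef]
    convert tsum_zero with n
    rcases n with _ | n
    · rw [walkCount_zero]; simp; omega
    · rw [walkCount_succ_boundary N 0 n (by omega)]; simp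
  have hSN : S N = 1 := by
    rw [hSdef]
    simp only
    rw [tsum_eq_single 0]
    · rw [walkCount_zero]; simp
    · intro n hn
      rcases n with _ | n
      · exact absurd rfl hn
      · rw [walkCount_succ_boundary N N n (by omega)]; simp
  have hrec : ∀ x, x + 2 ≤ N → S (x + 2) = 2 * Real.cos φ * S (x + 1) - S x := by
    intro x hx
    have h2 := (hsummable (x + 2) (by omega)).hasSum
    have h0 := (hsummable x (by omega)).hasSum
    have hcomb := (h2.add h0).mul_left q
    have heq : (fun n => q * ((walkCount N (x + 2) n : ℝ) * q ^ n +
        (walkCount N x n : ℝ) * q ^ n)) =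
        fun n => (walkCount N (x + 1) (n + 1) : ℝ) * q ^ (n + 1) := by
      funext n
      rw [walkCount_succ N (x + 1) n (by omega) (by omega),
        show x + 1 + 1 = x + 2 from rfl, show x + 1 - 1 = x from rfl]
      push_cast
      ring
    rw [heq] at hcomb
    have hshift := (hasSum_nat_add_iff
      (f := fun n => (walkCount N (x + 1) n : ℝ) * q ^ n) 1).mp hcomb
    rw [Finset.sum_range_one, walkCount_zero, if_neg (by omega : ¬ x + 1 = N)] at hshift
    simp only [Nat.cast_zero, zero_mul, add_zero] at hshift
    have hS1eq : S (x + 1) = q * (S (x + 2) + S x) := hshift.tsum_eq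
    have hqinv : q * (2 * Real.cos φ) = 1 := by
      rw [hq]; field_simp
    have : 2 * Real.cos φ * S (x + 1) = S (x + 2) + S x := by
      rw [hS1eq]
      calc 2 * Real.cos φ * (q * (S (x + 2) + S x))
          = (q * (2 * Real.cos φ)) * (S (x + 2) + S x) := by ring
        _ = S (x + 2) + S x := by rw [hqinv]; ring
    linarith
  have main : ∀ x, x ≤ N → S x * Real.sin φ = S 1 * Real.sin ((x : ℝ) * φ) := by
    intro x
    induction x using Nat.strong_induction_on with
    | _ x ih =>
      rcases x with _ | _ | x
      · intro _; simp [hS0]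
      · intro _; norm_num
      · intro hx
        have p1 := ih (x + 1) (by omega) (by omega)
        have p0 := ih x (by omega) (by omega)
        have hr := hrec x hx
        have key : Real.sin (((x : ℝ) + 1 + 1) * φ) =
            2 * Real.cos φ * Real.sin (((x : ℝ) + 1) * φ) - Real.sin ((x : ℝ) * φ) := by
          rw [show ((x : ℝ) + 1 + 1) * φ = ((x : ℝ) + 1) * φ + φ by ring,
            show (x : ℝ) * φ = ((x : ℝ) + 1) * φ - φ by ring,
            Real.sin_add, Real.sin_sub]
          ring
        push_cast at p1 p0 ⊢
        rw [hr, key]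
        linear_combination 2 * Real.cos φ * p1 - p0
  have pN := main N le_rfl
  rw [hSN, one_mul] at pN
  have pN1 := main (N - 1) (by omega)
  have hcN : ((N - 1 : ℕ) : ℝ) = (N : ℝ) - 1 := by
    have : (1 : ℕ) ≤ N := by omega
    push_cast [this]; ring
  rw [hcN] at pN1
  have hval : S (N - 1) = Real.sin (((N : ℝ) - 1) * φ) / Real.sin ((N : ℝ) * φ) := by
    have h1 : S 1 = Real.sin φ / Real.sin ((N : ℝ) * φ) := by
      rw [eq_div_iff hsinNφ.ne']
      linarith
    rw [h1] at pN1
    apply mul_right_cancel₀ hsinφ.ne'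
    rw [pN1]
    ring
  rw [(hsummable (N - 1) (by omega)).hasSum_iff]
  exact hval
end

section
/- For every integer N ≥ 1 and every real number φ with 0 < φ < π/(N+1), one has sin(N·φ) / sin((N+1)·φ) ≥ (N/(N+1)) · (1 + (1+2N)·φ²/6). -/
open Real Set

lemma aux1 : ∀ x ∈ Set.Icc (0:ℝ) π, x * Real.cos x - Real.sin x ≤ 0 := by
  have hd : ∀ x : ℝ, HasDerivAt (fun y => y * Real.cos y - Real.sin y) (-(x * Real.sin x)) x := by
    intro x
    have h1 := (hasDerivAt_id x).mul (Real.hasDerivAt_cos x)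
    have := h1.sub (Real.hasDerivAt_sin x)
    exact this.congr_deriv (by simp)
  intro x hx
  have hanti : AntitoneOn (fun y => y * Real.cos y - Real.sin y) (Set.Icc 0 π) := by
    apply antitoneOn_of_deriv_nonpos (convex_Icc 0 π)
    · exact ((continuous_id.mul Real.continuous_cos).sub Real.continuous_sin).continuousOn
    · intro y hy
      exact (hd y).differentiableAt.differentiableWithinAt
    · intro y hy
      rw [interior_Icc] at hy
      rw [(hd y).deriv]
      have hs : 0 ≤ Real.sin y := Real.sin_nonneg_of_nonneg_of_le_pi hy.1.le hy.2.le
      nlinarith [hy.1]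
  have := hanti (Set.left_mem_Icc.mpr Real.pi_pos.le) hx hx.1
  simpa using this

lemma aux2 : ∀ x ∈ Set.Icc (0:ℝ) π,
    x * Real.cos x - Real.sin x + x ^ 2 * Real.sin x / 3 ≤ 0 := by
  have hd : ∀ x : ℝ, HasDerivAt (fun y => y * Real.cos y - Real.sin y + y ^ 2 * Real.sin y / 3)
      (x / 3 * (x * Real.cos x - Real.sin x)) x := by
    intro x
    have h1 := ((hasDerivAt_id x).mul (Real.hasDerivAt_cos x)).sub (Real.hasDerivAt_sin x)
    have h2 := ((hasDerivAt_pow 2 x).mul (Real.hasDerivAt_sin x)).div_const 3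
    have := h1.add h2
    exact this.congr_deriv (by simp; ring)
  intro x hx
  have hanti : AntitoneOn (fun y => y * Real.cos y - Real.sin y + y ^ 2 * Real.sin y / 3)
      (Set.Icc 0 π) := by
    apply antitoneOn_of_deriv_nonpos (convex_Icc 0 π)
    · exact (((continuous_id.mul Real.continuous_cos).sub Real.continuous_sin).add
        (((continuous_pow 2).mul Real.continuous_sin).div_const 3)).continuousOn
    · intro y hy
      exact (hd y).differentiableAt.differentiableWithinAt
    · intro y hy
      rw [interior_Icc] at hy
      rw [(hd y).deriv]
      have h1 := aux1 y ⟨hy.1.le, hy.2.le⟩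
      have : (0:ℝ) ≤ y / 3 := by linarith [hy.1]
      exact mul_nonpos_of_nonneg_of_nonpos this h1
  have := hanti (Set.left_mem_Icc.mpr Real.pi_pos.le) hx hx.1
  simpa using this

lemma key (a b : ℝ) (ha : 0 < a) (hab : a < b) (hb : b < π) :
    Real.sin a / Real.sin b ≥ (a / b) * (1 + (b ^ 2 - a ^ 2) / 6) := by
  have hb0 : 0 < b := ha.trans hab
  have hsb : 0 < Real.sin b := Real.sin_pos_of_pos_of_lt_pi hb0 hb
  set g : ℝ → ℝ := fun y => Real.sin y * Real.exp (y ^ 2 / 6) / y with hg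
  -- derivative of g at nonzero points
  have hd : ∀ x : ℝ, x ≠ 0 → HasDerivAt g
      (((Real.cos x * Real.exp (x ^ 2 / 6) +
        Real.sin x * (Real.exp (x ^ 2 / 6) * (x / 3))) * x
        - Real.sin x * Real.exp (x ^ 2 / 6) * 1) / x ^ 2) x := by
    intro x hx
    have he : HasDerivAt (fun y : ℝ => Real.exp (y ^ 2 / 6)) (Real.exp (x ^ 2 / 6) * (x / 3)) x := by
      have hp : HasDerivAt (fun y : ℝ => y ^ 2 / 6) (x / 3) x := by
        have := (hasDerivAt_pow 2 x).div_const 6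
        exact this.congr_deriv (by norm_num; ring)
      exact (Real.hasDerivAt_exp (x ^ 2 / 6)).comp x hp
    exact ((Real.hasDerivAt_sin x).mul he).div (hasDerivAt_id x) hx
  have hanti : AntitoneOn g (Set.Icc a b) := by
    apply antitoneOn_of_deriv_nonpos (convex_Icc a b)
    · apply ContinuousOn.div
      · exact (Real.continuous_sin.mul (Real.continuous_exp.comp
          ((continuous_pow 2).div_const 6))).continuousOn
      · exact continuousOn_id
      · intro y hy; exact ne_of_gt (lt_of_lt_of_le ha hy.1)
    · intro y hy
      rw [interior_Icc] at hy
      have hy0 : 0 < y := ha.trans hy.1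
      exact (hd y hy0.ne').differentiableAt.differentiableWithinAt
    · intro y hy
      rw [interior_Icc] at hy
      have hy0 : 0 < y := ha.trans hy.1
      rw [(hd y hy0.ne').deriv]
      have h2 := aux2 y ⟨hy0.le, (hy.2.trans hb).le⟩
      have hexp : 0 < Real.exp (y ^ 2 / 6) := Real.exp_pos _
      apply div_nonpos_of_nonpos_of_nonneg
      · have hm := mul_nonpos_of_nonneg_of_nonpos hexp.le h2
        nlinarith [hm]
      · positivity
  have hgab : g b ≤ g a := hanti ⟨le_refl a, hab.le⟩ ⟨hab.le, le_refl b⟩ hab.le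
  -- unfold
  have h1 : Real.sin b * Real.exp (b ^ 2 / 6) / b ≤ Real.sin a * Real.exp (a ^ 2 / 6) / a := hgab
  have hratio : Real.sin a / Real.sin b ≥ (a / b) * Real.exp ((b ^ 2 - a ^ 2) / 6) := by
    have hkey : Real.sin b * Real.exp (b ^ 2 / 6) * a ≤ Real.sin a * Real.exp (a ^ 2 / 6) * b := by
      rw [div_le_div_iff₀ hb0 ha] at h1
      exact h1
    have heq : Real.exp ((b ^ 2 - a ^ 2) / 6) = Real.exp (b ^ 2 / 6) / Real.exp (a ^ 2 / 6) := by
      rw [← Real.exp_sub]; ring_nf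
    rw [ge_iff_le, le_div_iff₀ hsb, heq]
    have hEa : (0:ℝ) < Real.exp (a ^ 2 / 6) := Real.exp_pos _
    rw [div_mul_div_comm, div_mul_eq_mul_div, div_le_iff₀ (by positivity)]
    calc a * Real.exp (b ^ 2 / 6) * Real.sin b
        = Real.sin b * Real.exp (b ^ 2 / 6) * a := by ring
      _ ≤ Real.sin a * Real.exp (a ^ 2 / 6) * b := hkey
      _ = Real.sin a * (b * Real.exp (a ^ 2 / 6)) := by ring
  have hexp_ge : Real.exp ((b ^ 2 - a ^ 2) / 6) ≥ 1 + (b ^ 2 - a ^ 2) / 6 := by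
    have := Real.add_one_le_exp ((b ^ 2 - a ^ 2) / 6)
    linarith
  calc Real.sin a / Real.sin b ≥ (a / b) * Real.exp ((b ^ 2 - a ^ 2) / 6) := hratio
    _ ≥ (a / b) * (1 + (b ^ 2 - a ^ 2) / 6) := by
        apply mul_le_mul_of_nonneg_left hexp_ge (by positivity)

/-- Lower bound for the generating function `F_{N+1}(N, N+1 | 1/cos φ) = sin(Nφ)/sin((N+1)φ)`. -/
theorem sin_ratio_lower_bound_one (N : ℕ) (hN : 1 ≤ N) (φ : ℝ) (hφ0 : 0 < φ)
    (hφ : φ < Real.pi / ((N : ℝ) + 1)) :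
    Real.sin ((N : ℝ) * φ) / Real.sin (((N : ℝ) + 1) * φ) ≥
      ((N : ℝ) / ((N : ℝ) + 1)) * (1 + (1 + 2 * (N : ℝ)) * φ ^ 2 / 6) := by
  have hN1 : (1:ℝ) ≤ (N:ℝ) := by exact_mod_cast hN
  have hNpos : (0:ℝ) < N := by linarith
  have hb : ((N:ℝ) + 1) * φ < π := by
    rw [lt_div_iff₀ (by linarith)] at hφ
    linarith [hφ]
  have ha : 0 < (N:ℝ) * φ := by positivity
  have hab : (N:ℝ) * φ < ((N:ℝ) + 1) * φ := by nlinarith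
  have := key ((N:ℝ) * φ) (((N:ℝ) + 1) * φ) ha hab hb
  have heq : ((N:ℝ) * φ) / (((N:ℝ) + 1) * φ) * (1 + ((((N:ℝ) + 1) * φ) ^ 2 - ((N:ℝ) * φ) ^ 2) / 6)
      = ((N : ℝ) / ((N : ℝ) + 1)) * (1 + (1 + 2 * (N : ℝ)) * φ ^ 2 / 6) := by
    have h1 : ((N:ℝ) + 1) ≠ 0 := by linarith
    field_simp
    ring
  rw [heq] at this
  exact this
end

section
/- For every integer N ≥ 1 and every real number φ with 0 < φ < π/(N+1), one has sin(φ) / sin((N+1)·φ) ≥ (1/(N+1)) · (1 + (2N+N²)·φ²/6). -/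
private lemma mono_aux (f : ℝ → ℝ) (f' : ℝ → ℝ)
    (hd : ∀ y : ℝ, HasDerivAt f (f' y) y)
    (hpos : ∀ y : ℝ, 0 < y → 0 ≤ f' y) {x : ℝ} (hx : 0 ≤ x) : f 0 ≤ f x := by
  have key : MonotoneOn f (Set.Ici 0) := by
    apply monotoneOn_of_deriv_nonneg (convex_Ici 0)
    · exact fun y _ => ((hd y).differentiableAt.continuousAt).continuousWithinAt
    · intro y hy
      exact ((hd y).differentiableAt).differentiableWithinAt
    · intro y hy
      rw [interior_Ici] at hy
      rw [(hd y).deriv]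
      exact hpos y hy
  exact key (Set.self_mem_Ici) (Set.mem_Ici.2 hx) hx

private lemma aux_sin_ge {x : ℝ} (hx : 0 ≤ x) : x - x^3/6 ≤ Real.sin x := by
  have := mono_aux (fun y : ℝ => Real.sin y - (y - y^3/6))
    (fun y : ℝ => Real.cos y - (1 - y^2/2))
    (fun y => (Real.hasDerivAt_sin y).sub (((hasDerivAt_id y).sub
      ((hasDerivAt_pow 3 y).div_const 6)).congr_deriv (by ring_nf)))
    (fun y _ => by linarith [Real.one_sub_sq_div_two_le_cos (x := y)]) hx
  simp only [Real.sin_zero] at this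
  linarith [this]

private lemma aux_cos_le {x : ℝ} (hx : 0 ≤ x) : Real.cos x ≤ 1 - x^2/2 + x^4/24 := by
  have := mono_aux (fun y : ℝ => (1 - y^2/2 + y^4/24) - Real.cos y)
    (fun y : ℝ => (y^3/6 - y) + Real.sin y)
    (fun y => ((((hasDerivAt_pow 2 y).div_const 2).const_sub 1).add
      ((hasDerivAt_pow 4 y).div_const 24)).sub (Real.hasDerivAt_cos y) |>.congr_deriv (by ring_nf))
    (fun y hy => by linarith [aux_sin_ge hy.le]) hx
  simp only [Real.cos_zero] at this
  linarith [this]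

private lemma aux_sin_le {x : ℝ} (hx : 0 ≤ x) : Real.sin x ≤ x - x^3/6 + x^5/120 := by
  have := mono_aux (fun y : ℝ => (y - y^3/6 + y^5/120) - Real.sin y)
    (fun y : ℝ => (1 - y^2/2 + y^4/24) - Real.cos y)
    (fun y => (((hasDerivAt_id y).sub ((hasDerivAt_pow 3 y).div_const 6)).add
      ((hasDerivAt_pow 5 y).div_const 120)).sub (Real.hasDerivAt_sin y) |>.congr_deriv (by ring_nf))
    (fun y hy => by linarith [aux_cos_le hy.le]) hx
  simp only [Real.sin_zero] at this
  linarith [this]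

/-- Lower bound for the generating function `F_{N+1}(1, N+1 | 1/cos φ) = sin(φ)/sin((N+1)φ)`. -/
theorem sin_ratio_lower_bound_two (N : ℕ) (hN : 1 ≤ N) (φ : ℝ) (hφ0 : 0 < φ)
    (hφ : φ < Real.pi / ((N : ℝ) + 1)) :
    Real.sin φ / Real.sin (((N : ℝ) + 1) * φ) ≥
      (1 / ((N : ℝ) + 1)) * (1 + (2 * (N : ℝ) + (N : ℝ) ^ 2) * φ ^ 2 / 6) := by
  set M : ℝ := (N : ℝ) + 1 with hMdef
  have hM2 : (2:ℝ) ≤ M := by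
    have : (1:ℝ) ≤ (N : ℝ) := by exact_mod_cast hN
    simp [hMdef]; linarith
  have hM0 : (0:ℝ) < M := by linarith
  have hMφ : M * φ < Real.pi := by
    rw [lt_div_iff₀ hM0] at hφ; linarith [hφ]
  have hMφ0 : 0 < M * φ := mul_pos hM0 hφ0
  have hsinm : 0 < Real.sin (M * φ) := Real.sin_pos_of_pos_of_lt_pi hMφ0 hMφ
  have hsinφ : 0 < Real.sin φ := by
    apply Real.sin_pos_of_pos_of_lt_pi hφ0
    calc φ < Real.pi / M := hφ
    _ ≤ Real.pi := by
        rw [div_le_iff₀ hM0]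
        nlinarith [Real.pi_pos]
  have hπ2 : Real.pi ^ 2 < 9.9225 := by
    nlinarith [Real.pi_lt_d2, Real.pi_pos]
  have hKM : 2 * (N : ℝ) + (N : ℝ) ^ 2 = M ^ 2 - 1 := by simp [hMdef]; ring
  have hφπ2 : M ^ 2 * φ ^ 2 < Real.pi ^ 2 := by nlinarith [hMφ, hMφ0]
  -- key polynomial inequality
  have h14 : M ^ 2 * (M ^ 2 - 1) * φ ^ 2 ≤ 14 * M ^ 2 - 20 := by
    have h9 : M ^ 2 * φ ^ 2 ≤ 9.9225 := (hφπ2.trans hπ2).le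
    have h1 : (M ^ 2 - 1) * (M ^ 2 * φ ^ 2) ≤ (M ^ 2 - 1) * 9.9225 :=
      mul_le_mul_of_nonneg_left h9 (by nlinarith)
    nlinarith [h1]
  have key : (1 + (M ^ 2 - 1) * φ ^ 2 / 6) * Real.sin (M * φ) ≤ M * Real.sin φ := by
    have hKpos : 0 ≤ 1 + (M ^ 2 - 1) * φ ^ 2 / 6 := by nlinarith [sq_nonneg φ]
    have h1 : Real.sin (M * φ) ≤ M * φ - (M * φ)^3/6 + (M * φ)^5/120 := aux_sin_le hMφ0.le
    have h2 : φ - φ^3/6 ≤ Real.sin φ := aux_sin_ge hφ0.le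
    have hpoly : (1 + (M ^ 2 - 1) * φ ^ 2 / 6) * (M * φ - (M * φ)^3/6 + (M * φ)^5/120)
        ≤ M * (φ - φ^3/6) := by
      have hid : M * (φ - φ^3/6) -
          (1 + (M ^ 2 - 1) * φ ^ 2 / 6) * (M * φ - (M * φ)^3/6 + (M * φ)^5/120)
          = M^3 * φ^5 / 720 * ((14 * M ^ 2 - 20) - M ^ 2 * (M ^ 2 - 1) * φ ^ 2) := by ring
      have hnn : 0 ≤ M^3 * φ^5 / 720 * ((14 * M ^ 2 - 20) - M ^ 2 * (M ^ 2 - 1) * φ ^ 2) := by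
        apply mul_nonneg (by positivity) (by linarith)
      linarith [hid, hnn]
    calc (1 + (M ^ 2 - 1) * φ ^ 2 / 6) * Real.sin (M * φ)
        ≤ (1 + (M ^ 2 - 1) * φ ^ 2 / 6) * (M * φ - (M * φ)^3/6 + (M * φ)^5/120) :=
          mul_le_mul_of_nonneg_left h1 hKpos
      _ ≤ M * (φ - φ^3/6) := hpoly
      _ ≤ M * Real.sin φ := mul_le_mul_of_nonneg_left h2 hM0.le
  rw [ge_iff_le, le_div_iff₀ hsinm, hKM]
  calc 1 / M * (1 + (M ^ 2 - 1) * φ ^ 2 / 6) * Real.sin (M * φ)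
      = 1 / M * ((1 + (M ^ 2 - 1) * φ ^ 2 / 6) * Real.sin (M * φ)) := by ring
    _ ≤ 1 / M * (M * Real.sin φ) := by
        apply mul_le_mul_of_nonneg_left key (by positivity)
    _ = Real.sin φ := by field_simp
end

section
/- For every integer N ≥ 1 and every real number φ with 0 < φ < π/(N+1), one has sin(N·φ) / sin((N+1)·φ) ≥ (N/(N+1)) · sinh(φ·√(2N+1)) / (φ·√(2N+1)). -/
open Filter Finset Real

lemma tendsto_sinh_prod (y : ℝ) :
    Tendsto (fun n : ℕ => Real.pi * y * ∏ j ∈ Finset.range n, ((1:ℝ) + y^2/((j:ℝ)+1)^2))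
      atTop (nhds (Real.sinh (Real.pi * y))) := by
  have h := (Complex.continuous_im.tendsto _).comp (Complex.tendsto_euler_sin_prod (y * Complex.I))
  convert h using 1
  · funext n
    simp only [Function.comp_apply]
    have hprod : (∏ j ∈ Finset.range n, ((1:ℂ) - (y*Complex.I)^2/((j:ℂ)+1)^2))
        = ((∏ j ∈ Finset.range n, ((1:ℝ) + y^2/((j:ℝ)+1)^2) : ℝ) : ℂ) := by
      push_cast
      refine Finset.prod_congr rfl fun j _ => ?_
      rw [mul_pow, Complex.I_sq]
      ring
    rw [hprod]
    have : (Real.pi : ℂ) * (y*Complex.I) * ((∏ j ∈ Finset.range n, ((1:ℝ) + y^2/((j:ℝ)+1)^2) : ℝ) : ℂ)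
        = ((Real.pi * y * ∏ j ∈ Finset.range n, ((1:ℝ) + y^2/((j:ℝ)+1)^2) : ℝ) : ℂ) * Complex.I := by
      push_cast; ring
    rw [this, Complex.mul_I_im, Complex.ofReal_re]
  · have : (Real.pi : ℂ) * (y * Complex.I) = ((Real.pi * y : ℝ) : ℂ) * Complex.I := by push_cast; ring
    rw [this, Complex.sin_mul_I, ← Complex.ofReal_sinh, Complex.mul_I_im, Complex.ofReal_re]

lemma sin_prod_aux (a b s : ℝ) (ha0 : 0 < a) (hb0 : 0 < b) (hs0 : 0 < s)
    (hbπ : b < Real.pi) (hpyth : a^2 + s^2 = b^2) :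
    (a / b) * (Real.sinh s / s * Real.sin b) ≤ Real.sin a := by
  have hπ : (0:ℝ) < Real.pi := Real.pi_pos
  have heqa : Real.pi * (a / Real.pi) = a := by field_simp
  have heqb : Real.pi * (b / Real.pi) = b := by field_simp
  have heqs : Real.pi * (s / Real.pi) = s := by field_simp
  have hA : Tendsto (fun n : ℕ => a * ∏ j ∈ Finset.range n, ((1:ℝ) - (a/Real.pi)^2/((j:ℝ)+1)^2))
      atTop (nhds (Real.sin a)) := by
    have h := Real.tendsto_euler_sin_prod (a / Real.pi)
    simpa only [heqa] using h
  have hB : Tendsto (fun n : ℕ => b * ∏ j ∈ Finset.range n, ((1:ℝ) - (b/Real.pi)^2/((j:ℝ)+1)^2))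
      atTop (nhds (Real.sin b)) := by
    have h := Real.tendsto_euler_sin_prod (b / Real.pi)
    simpa only [heqb] using h
  have hS : Tendsto (fun n : ℕ => s * ∏ j ∈ Finset.range n, ((1:ℝ) + (s/Real.pi)^2/((j:ℝ)+1)^2))
      atTop (nhds (Real.sinh s)) := by
    have h := tendsto_sinh_prod (s / Real.pi)
    simpa only [heqs] using h
  have hQ : Tendsto (fun n : ℕ => ∏ j ∈ Finset.range n, ((1:ℝ) + (s/Real.pi)^2/((j:ℝ)+1)^2))
      atTop (nhds (Real.sinh s / s)) := by
    have h := hS.div_const s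
    refine h.congr fun n => ?_
    rw [mul_comm, mul_div_assoc, div_self hs0.ne', mul_one]
  have hprodineq : ∀ n : ℕ,
      (∏ j ∈ Finset.range n, ((1:ℝ) + (s/Real.pi)^2/((j:ℝ)+1)^2)) *
      (∏ j ∈ Finset.range n, ((1:ℝ) - (b/Real.pi)^2/((j:ℝ)+1)^2)) ≤
      ∏ j ∈ Finset.range n, ((1:ℝ) - (a/Real.pi)^2/((j:ℝ)+1)^2) := by
    intro n
    rw [← Finset.prod_mul_distrib]
    have hfacts : ∀ j : ℕ,
        0 ≤ (1 + (s/Real.pi)^2/((j:ℝ)+1)^2) * (1 - (b/Real.pi)^2/((j:ℝ)+1)^2) ∧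
        (1 + (s/Real.pi)^2/((j:ℝ)+1)^2) * (1 - (b/Real.pi)^2/((j:ℝ)+1)^2) ≤
          1 - (a/Real.pi)^2/((j:ℝ)+1)^2 := by
      intro j
      have hd1 : (1:ℝ) ≤ ((j:ℝ)+1)^2 := by nlinarith [j.cast_nonneg (α := ℝ)]
      have hd0 : (0:ℝ) < ((j:ℝ)+1)^2 := by linarith
      have hx0 : 0 ≤ (a/Real.pi)^2/((j:ℝ)+1)^2 := by positivity
      have hy0 : 0 ≤ (s/Real.pi)^2/((j:ℝ)+1)^2 := by positivity
      have hxyz : (a/Real.pi)^2/((j:ℝ)+1)^2 + (s/Real.pi)^2/((j:ℝ)+1)^2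
          = (b/Real.pi)^2/((j:ℝ)+1)^2 := by
        rw [← add_div]
        congr 1
        rw [div_pow, div_pow, div_pow, ← add_div, hpyth]
      have hz0 : 0 ≤ (b/Real.pi)^2/((j:ℝ)+1)^2 := by positivity
      have hz1 : (b/Real.pi)^2/((j:ℝ)+1)^2 ≤ 1 := by
        rw [div_le_one hd0]
        have hb1 : (b/Real.pi)^2 ≤ 1 := by
          have h1 : b / Real.pi ≤ 1 := by rw [div_le_one hπ]; exact hbπ.le
          have h2 : 0 ≤ b / Real.pi := div_nonneg hb0.le hπ.le
          nlinarith
        linarith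
      constructor
      · exact mul_nonneg (by linarith) (by linarith)
      · nlinarith [mul_nonneg hy0 hz0]
    exact Finset.prod_le_prod (fun j _ => (hfacts j).1) (fun j _ => (hfacts j).2)
  have hineq : ∀ n : ℕ,
      (a / b) * ((∏ j ∈ Finset.range n, ((1:ℝ) + (s/Real.pi)^2/((j:ℝ)+1)^2)) *
        (b * ∏ j ∈ Finset.range n, ((1:ℝ) - (b/Real.pi)^2/((j:ℝ)+1)^2))) ≤
      a * ∏ j ∈ Finset.range n, ((1:ℝ) - (a/Real.pi)^2/((j:ℝ)+1)^2) := by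
    intro n
    have key : ∀ q p : ℝ, (a / b) * (q * (b * p)) = a * (q * p) := by
      intro q p; field_simp
    calc (a / b) * ((∏ j ∈ Finset.range n, ((1:ℝ) + (s/Real.pi)^2/((j:ℝ)+1)^2)) *
          (b * ∏ j ∈ Finset.range n, ((1:ℝ) - (b/Real.pi)^2/((j:ℝ)+1)^2)))
        = a * ((∏ j ∈ Finset.range n, ((1:ℝ) + (s/Real.pi)^2/((j:ℝ)+1)^2)) *
          (∏ j ∈ Finset.range n, ((1:ℝ) - (b/Real.pi)^2/((j:ℝ)+1)^2))) := key _ _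
      _ ≤ a * ∏ j ∈ Finset.range n, ((1:ℝ) - (a/Real.pi)^2/((j:ℝ)+1)^2) :=
          mul_le_mul_of_nonneg_left (hprodineq n) ha0.le
  exact le_of_tendsto_of_tendsto' (tendsto_const_nhds.mul (hQ.mul hB)) hA hineq

/-- Intermediate inequality from the infinite product expansion of sine:
`sin(Nφ)/sin((N+1)φ) ≥ (N/(N+1)) · sinh(φ√(2N+1))/(φ√(2N+1))`. -/
theorem sin_ratio_sinh_lower_bound (N : ℕ) (hN : 1 ≤ N) (φ : ℝ) (hφ0 : 0 < φ)
    (hφ : φ < Real.pi / ((N : ℝ) + 1)) :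
    Real.sin ((N : ℝ) * φ) / Real.sin (((N : ℝ) + 1) * φ) ≥
      ((N : ℝ) / ((N : ℝ) + 1)) *
        (Real.sinh (φ * Real.sqrt (2 * (N : ℝ) + 1)) / (φ * Real.sqrt (2 * (N : ℝ) + 1))) := by
  have hN1 : (1:ℝ) ≤ (N:ℝ) := by exact_mod_cast hN
  have hNpos : (0:ℝ) < (N:ℝ) + 1 := by linarith
  have hsq : (0:ℝ) < 2 * (N:ℝ) + 1 := by linarith
  have ha0 : 0 < (N:ℝ) * φ := by positivity
  have hb0 : 0 < ((N:ℝ) + 1) * φ := by positivity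
  have hs0 : 0 < φ * Real.sqrt (2 * (N:ℝ) + 1) := mul_pos hφ0 (Real.sqrt_pos.mpr hsq)
  have hbπ : ((N:ℝ) + 1) * φ < Real.pi := by
    calc ((N:ℝ)+1) * φ < ((N:ℝ)+1) * (Real.pi / ((N:ℝ)+1)) := mul_lt_mul_of_pos_left hφ hNpos
      _ = Real.pi := by field_simp
  have hpyth : ((N:ℝ) * φ)^2 + (φ * Real.sqrt (2 * (N:ℝ) + 1))^2 = (((N:ℝ) + 1) * φ)^2 := by
    have h := Real.sq_sqrt hsq.le
    nlinarith [h]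
  have haux := sin_prod_aux ((N:ℝ) * φ) (((N:ℝ) + 1) * φ) (φ * Real.sqrt (2 * (N:ℝ) + 1))
    ha0 hb0 hs0 hbπ hpyth
  have hsinb : 0 < Real.sin (((N:ℝ) + 1) * φ) :=
    Real.sin_pos_of_pos_of_lt_pi hb0 hbπ
  have habq : (N:ℝ) * φ / (((N:ℝ) + 1) * φ) = (N:ℝ) / ((N:ℝ) + 1) :=
    mul_div_mul_right _ _ hφ0.ne'
  rw [habq] at haux
  rw [ge_iff_le, le_div_iff₀ hsinb]
  linarith [haux]
end

section
/- For every real number γ > 0 there exists N₀ ∈ ℕ such that for every natural number N ≥ N₀ the following holds: setting η̄ := 1/cos(γ/(N+1)) − 1 and φ := γ/(N+1), for every integer ℓ > N one has (ℓ·η̄)/(2·(ℓ+1)) + (1/(ℓ+1))² ≤ (1/(N+1))² + (N/3)·φ². -/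
/-- For every `γ > 0` there is `N₀` such that for all `N ≥ N₀`, with
`η̄ = 1/cos(γ/(N+1)) − 1` and `φ = γ/(N+1)`, for every integer `ℓ > N` one has
`ℓη̄/(2(ℓ+1)) + (1/(ℓ+1))² ≤ (1/(N+1))² + (N/3)φ²`. -/
theorem stretch_comparison_inequality (γ : ℝ) (hγ : 0 < γ) :
    ∃ N₀ : ℕ, ∀ N : ℕ, N₀ ≤ N → ∀ ℓ : ℕ, N < ℓ →
      ((ℓ : ℝ) * (1 / Real.cos (γ / ((N : ℝ) + 1)) - 1)) / (2 * ((ℓ : ℝ) + 1)) +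
          (1 / ((ℓ : ℝ) + 1)) ^ 2 ≤
        (1 / ((N : ℝ) + 1)) ^ 2 + ((N : ℝ) / 3) * (γ / ((N : ℝ) + 1)) ^ 2 := by
  refine ⟨max 2 ⌈γ⌉₊, fun N hN ℓ hℓ => ?_⟩
  have hN2 : (2 : ℕ) ≤ N := le_trans (le_max_left _ _) hN
  have hNγ : γ ≤ (N : ℝ) := le_trans (Nat.le_ceil γ)
    (by exact_mod_cast le_trans (le_max_right _ _) hN)
  have hN1 : (0 : ℝ) < (N : ℝ) + 1 := by positivity
  set φ : ℝ := γ / ((N : ℝ) + 1) with hφdef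
  have hφpos : 0 < φ := div_pos hγ hN1
  have hφ1 : φ < 1 := (div_lt_one hN1).2 (by linarith)
  have hcos_lb : 1 - φ ^ 2 / 2 ≤ Real.cos φ := Real.one_sub_sq_div_two_le_cos
  have hφsq : φ ^ 2 < 1 := by nlinarith
  have hcos_half : (1 : ℝ) / 2 < Real.cos φ := by nlinarith
  have hcos_pos : 0 < Real.cos φ := by linarith
  have hcos_le : Real.cos φ ≤ 1 := Real.cos_le_one φ
  -- η̄ = 1/cos φ - 1 ≤ φ²
  have hη_le : 1 / Real.cos φ - 1 ≤ φ ^ 2 := by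
    rw [div_sub' (ne_of_gt hcos_pos), div_le_iff₀ hcos_pos]
    nlinarith
  have hη_nonneg : 0 ≤ 1 / Real.cos φ - 1 := by
    rw [sub_nonneg, le_div_iff₀ hcos_pos]; linarith
  have hℓ1 : (0 : ℝ) < (ℓ : ℝ) + 1 := by positivity
  have hℓN : (N : ℝ) + 1 ≤ (ℓ : ℝ) + 1 := by
    have : (N : ℝ) ≤ (ℓ : ℝ) := by exact_mod_cast hℓ.le
    linarith
  -- first term bound
  have h1 : ((ℓ : ℝ) * (1 / Real.cos φ - 1)) / (2 * ((ℓ : ℝ) + 1)) ≤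
      (1 / Real.cos φ - 1) / 2 := by
    rw [div_le_div_iff₀ (by positivity) (by norm_num)]
    nlinarith [(Nat.cast_nonneg ℓ : (0:ℝ) ≤ (ℓ:ℝ))]
  -- second term bound
  have h2 : (1 / ((ℓ : ℝ) + 1)) ^ 2 ≤ (1 / ((N : ℝ) + 1)) ^ 2 := by
    gcongr
  have hN3 : (1 : ℝ) ≤ (N : ℝ) / 3 * 2 := by
    have : (2 : ℝ) ≤ (N : ℝ) := by exact_mod_cast hN2
    linarith
  have h3 : (1 / Real.cos φ - 1) / 2 ≤ ((N : ℝ) / 3) * φ ^ 2 := by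
    have hφ2 : 0 ≤ φ ^ 2 := sq_nonneg φ
    nlinarith
  calc ((ℓ : ℝ) * (1 / Real.cos φ - 1)) / (2 * ((ℓ : ℝ) + 1)) + (1 / ((ℓ : ℝ) + 1)) ^ 2
      ≤ (1 / Real.cos φ - 1) / 2 + (1 / ((N : ℝ) + 1)) ^ 2 := add_le_add h1 h2
    _ ≤ (1 / ((N : ℝ) + 1)) ^ 2 + ((N : ℝ) / 3) * φ ^ 2 := by linarith
end
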